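/- Let G be a finite simple chordal graph. If G is vertex decomposable, then Shed(G) is a dominating set of G. -/

import Mathlib

open scoped Classical

variable {V : Type*}

/-- `S` is an independent set of the induced subgraph of `G` on the vertex set `A`. -/
def IsIndepIn (G : SimpleGraph V) (A S : Finset V) : Prop :=
  S ⊆ A ∧ ∀ u ∈ S, ∀ v ∈ S, ¬ G.Adj u v

/-- `S` is a maximal independent set of the induced subgraph of `G` on the vertex set `A`. -/
def IsMaxIndepIn (G : SimpleGraph V) (A S : Finset V) : Prop :=
  IsIndepIn G A S ∧ ∀ T, IsIndepIn G A T → S ⊆ T → T = S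

/-- The induced subgraph of `G` on the vertex set `A` is well-covered: all of its
maximal independent sets have the same cardinality. -/
def WellCoveredOn (G : SimpleGraph V) (A : Finset V) : Prop :=
  ∀ S T, IsMaxIndepIn G A S → IsMaxIndepIn G A T → S.card = T.card

/-- The closed neighbourhood of `x` deleted from `A`: the vertices of `A` distinct from `x`
and not adjacent to `x`. -/
noncomputable def delClosedNbhd (G : SimpleGraph V) (A : Finset V) (x : V) : Finset V :=
  A.filter fun y => y ≠ x ∧ ¬ G.Adj x y

/-- The induced subgraph of `G` on the vertex set `A` is vertex decomposable: it is
well-covered, and either it has no edges, or some vertex `x ∈ A` is such that deleting `x`,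
respectively the closed neighbourhood of `x`, leaves a vertex decomposable graph. -/
def VertexDecomposableOn (G : SimpleGraph V) (A : Finset V) : Prop :=
  WellCoveredOn G A ∧
    ((∀ u ∈ A, ∀ v ∈ A, ¬ G.Adj u v) ∨
      ∃ x, ∃ _h : x ∈ A,
        VertexDecomposableOn G (A.erase x) ∧
        VertexDecomposableOn G (delClosedNbhd G A x))
termination_by A.card
decreasing_by
  · exact Finset.card_erase_lt_of_mem (by assumption)
  · exact Finset.card_lt_card
      (Finset.filter_ssubset.mpr ⟨x, by assumption, by simp⟩)

/-- A finite simple graph is well-covered if all of its maximal independent sets have the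
same cardinality. -/
def WellCovered (G : SimpleGraph V) [Fintype V] : Prop :=
  WellCoveredOn G Finset.univ

/-- A finite simple graph is vertex decomposable. -/
def VertexDecomposable (G : SimpleGraph V) [Fintype V] : Prop :=
  VertexDecomposableOn G Finset.univ

/-- The set of shedding vertices of `G` : those vertices `x` such that both `G \ x` and
`G \ N[x]` are vertex decomposable. -/
def Shed (G : SimpleGraph V) [Fintype V] : Set V :=
  {x | VertexDecomposableOn G (Finset.univ.erase x) ∧
       VertexDecomposableOn G (delClosedNbhd G Finset.univ x)}

/-- `D` is a dominating set of `G`: every vertex not in `D` is adjacent to a vertex of `D`. -/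
def IsDominatingSet (G : SimpleGraph V) (D : Set V) : Prop :=
  ∀ v, v ∉ D → ∃ u ∈ D, G.Adj u v

/-- A vertex is simplicial if its neighbourhood induces a clique. -/
def IsSimplicialVertex (G : SimpleGraph V) (x : V) : Prop :=
  ∀ u v, G.Adj x u → G.Adj x v → u ≠ v → G.Adj u v

/-- A graph is chordal if every induced cycle has length three, i.e. there is no induced
cycle with four or more vertices. -/
def IsChordalGraph {W : Type*} (G : SimpleGraph W) : Prop :=
  ∀ n : ℕ, 4 ≤ n → IsEmpty (SimpleGraph.cycleGraph n ↪g G)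


section AuxDev
variable {G : SimpleGraph V}

lemma mem_delClosedNbhd {A : Finset V} {x y : V} :
    y ∈ delClosedNbhd G A x ↔ y ∈ A ∧ y ≠ x ∧ ¬ G.Adj x y := by
  unfold delClosedNbhd; exact Finset.mem_filter

lemma exists_maxIndep_ext {A S : Finset V} (hS : IsIndepIn G A S) :
    ∃ T, S ⊆ T ∧ IsMaxIndepIn G A T := by
  classical
  set F := A.powerset.filter (fun T => S ⊆ T ∧ IsIndepIn G A T) with hF
  have hSF : S ∈ F := by
    simp only [hF, Finset.mem_filter, Finset.mem_powerset]
    exact ⟨hS.1, Finset.Subset.refl _, hS⟩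
  obtain ⟨T, hTF, hTmax⟩ := F.exists_max_image Finset.card ⟨S, hSF⟩
  simp only [hF, Finset.mem_filter, Finset.mem_powerset] at hTF
  refine ⟨T, hTF.2.1, hTF.2.2, ?_⟩
  intro T' hT' hTT'
  have hT'F : T' ∈ F := by
    simp only [hF, Finset.mem_filter, Finset.mem_powerset]
    exact ⟨hT'.1, hTF.2.1.trans hTT', hT'⟩
  exact (Finset.eq_of_subset_of_card_le hTT' (hTmax T' hT'F)).symm

lemma exists_maxIndep (G : SimpleGraph V) (A : Finset V) : ∃ T, IsMaxIndepIn G A T := by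
  obtain ⟨T, _, hT⟩ := exists_maxIndep_ext (G := G) (A := A) (S := ∅)
    ⟨Finset.empty_subset _, by simp⟩
  exact ⟨T, hT⟩

lemma indepIn_insert {A S : Finset V} {x : V} (hS : IsIndepIn G A S) (hx : x ∈ A)
    (hadj : ∀ y ∈ S, ¬ G.Adj x y) : IsIndepIn G A (insert x S) := by
  refine ⟨Finset.insert_subset hx hS.1, ?_⟩
  intro p hp q hq
  rcases Finset.mem_insert.1 hp with hpx | hpS <;> rcases Finset.mem_insert.1 hq with hqx | hqS
  · subst hpx; subst hqx; exact G.irrefl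
  · subst hpx; exact hadj q hqS
  · subst hqx; exact fun h => hadj p hpS (G.adj_symm h)
  · exact hS.2 p hpS q hqS

lemma maxIndep_dominates {A M : Finset V} (hM : IsMaxIndepIn G A M) {y : V}
    (hy : y ∈ A) (hyM : y ∉ M) : ∃ m ∈ M, G.Adj m y := by
  by_contra hcon
  push_neg at hcon
  have hins : IsIndepIn G A (insert y M) :=
    indepIn_insert hM.1 hy (fun m hm => fun h => hcon m hm (G.adj_symm h))
  have := hM.2 _ hins (Finset.subset_insert _ _)
  exact hyM (this ▸ Finset.mem_insert_self y M)

/-- Key lemma F1: removing a closed neighbourhood preserves well-coveredness. -/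
lemma wcOn_delClosedNbhd {A : Finset V} (hwc : WellCoveredOn G A) {x : V} (hx : x ∈ A) :
    WellCoveredOn G (delClosedNbhd G A x) := by
  have key : ∀ S, IsMaxIndepIn G (delClosedNbhd G A x) S →
      IsMaxIndepIn G A (insert x S) ∧ x ∉ S := by
    intro S hS
    have hxS : x ∉ S := fun h => ((mem_delClosedNbhd.1 (hS.1.1 h)).2.1 rfl)
    have hsub : S ⊆ A := fun y hy => (mem_delClosedNbhd.1 (hS.1.1 hy)).1
    have hins : IsIndepIn G A (insert x S) :=
      indepIn_insert ⟨hsub, hS.1.2⟩ hx (fun y hy => (mem_delClosedNbhd.1 (hS.1.1 hy)).2.2)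
    refine ⟨⟨hins, ?_⟩, hxS⟩
    intro T hT hsubT
    have hxT : x ∈ T := hsubT (Finset.mem_insert_self _ _)
    have hTe : T.erase x ⊆ delClosedNbhd G A x := by
      intro t ht
      have htT := Finset.mem_of_mem_erase ht
      exact mem_delClosedNbhd.2 ⟨hT.1 htT, Finset.ne_of_mem_erase ht,
        hT.2 x hxT t htT⟩
    have hTeIndep : IsIndepIn G (delClosedNbhd G A x) (T.erase x) :=
      ⟨hTe, fun p hp q hq => hT.2 p (Finset.mem_of_mem_erase hp) q (Finset.mem_of_mem_erase hq)⟩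
    have hSsubTe : S ⊆ T.erase x := by
      intro s hs
      exact Finset.mem_erase.2 ⟨fun h => hxS (h ▸ hs), hsubT (Finset.mem_insert_of_mem hs)⟩
    have hTeS : T.erase x = S := hS.2 _ hTeIndep hSsubTe
    apply Finset.Subset.antisymm
    · intro t ht
      by_cases htx : t = x
      · exact htx ▸ Finset.mem_insert_self _ _
      · exact Finset.mem_insert_of_mem (hTeS ▸ Finset.mem_erase.2 ⟨htx, ht⟩)
    · exact hsubT
  intro S T hS hT
  obtain ⟨hS', hxS⟩ := key S hS
  obtain ⟨hT', hxT⟩ := key T hT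
  have := hwc _ _ hS' hT'
  rwa [Finset.card_insert_of_notMem hxS, Finset.card_insert_of_notMem hxT,
    Nat.add_right_cancel_iff] at this

/-- A neighbour of a simplicial vertex can be deleted preserving well-coveredness. -/
lemma wcOn_erase_of_simplicial_nbr {A : Finset V} (hwc : WellCoveredOn G A) {u v : V}
    (hu : u ∈ A)
    (hsimp : ∀ x ∈ A, ∀ y ∈ A, G.Adj u x → G.Adj u y → x ≠ y → G.Adj x y)
    (hv : v ∈ A) (hadj : G.Adj u v) :
    WellCoveredOn G (A.erase v) := by
  have key : ∀ S, IsMaxIndepIn G (A.erase v) S → IsMaxIndepIn G A S := by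
    intro S hS
    have hsub : S ⊆ A := hS.1.1.trans (Finset.erase_subset _ _)
    have huv : u ≠ v := hadj.ne
    have huev : u ∈ A.erase v := Finset.mem_erase.2 ⟨huv, hu⟩
    -- find m ∈ S adjacent to v
    have hm : ∃ m ∈ S, G.Adj m v := by
      by_cases huS : u ∈ S
      · exact ⟨u, huS, hadj⟩
      · obtain ⟨m, hmS, hmu⟩ := maxIndep_dominates hS huev huS
        have hmv : m ≠ v := Finset.ne_of_mem_erase (hS.1.1 hmS)
        exact ⟨m, hmS, hsimp m (hsub hmS) v hv (G.adj_symm hmu) hadj hmv⟩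
    obtain ⟨m, hmS, hmv⟩ := hm
    refine ⟨⟨hsub, hS.1.2⟩, ?_⟩
    intro T hT hST
    have hvT : v ∉ T := fun hvT => hT.2 m (hST hmS) v hvT hmv
    have hTsub : T ⊆ A.erase v := fun t ht =>
      Finset.mem_erase.2 ⟨fun h => hvT (h ▸ ht), hT.1 ht⟩
    exact hS.2 T ⟨hTsub, hT.2⟩ hST
  intro S T hS hT
  exact hwc _ _ (key S hS) (key T hT)

end AuxDev

section Cycles
set_option linter.unnecessarySeqFocus false
set_option maxHeartbeats 1000000
variable {G : SimpleGraph V}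
lemma chordal_no_cycle (hch : IsChordalGraph G) {n : ℕ} (hn : 4 ≤ n) (f : Fin n → V)
    (hinj : Function.Injective f)
    (hiff : ∀ i j : Fin n, G.Adj (f i) (f j) ↔ (SimpleGraph.cycleGraph n).Adj i j) : False :=
  (hch n hn).false ⟨⟨f, hinj⟩, hiff _ _⟩

lemma chordal_c4 (hch : IsChordalGraph G) {v0 v1 v2 v3 : V}
    (e0 : G.Adj v0 v1) (e1 : G.Adj v1 v2) (e2 : G.Adj v2 v3) (e3 : G.Adj v3 v0) (d02 : ¬ G.Adj v0 v2) (d13 : ¬ G.Adj v1 v3) (n02 : v0 ≠ v2) (n13 : v1 ≠ v3) : False := by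
  apply chordal_no_cycle hch (by norm_num) ![v0, v1, v2, v3]
  · intro i j h
    fin_cases i <;> fin_cases j <;>
      (first | rfl | ((try simp at h) <;> (first | exact absurd h e0.ne | exact absurd h e0.ne.symm | exact absurd h e1.ne | exact absurd h e1.ne.symm | exact absurd h e2.ne | exact absurd h e2.ne.symm | exact absurd h e3.ne | exact absurd h e3.ne.symm | exact absurd h n02 | exact absurd h n02.symm | exact absurd h n13 | exact absurd h n13.symm)))
  · intro i j
    fin_cases i <;> fin_cases j <;>
      ((try simp only [Matrix.cons_val_zero, Matrix.cons_val_one, Matrix.head_cons,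
        Matrix.cons_val_two, Matrix.cons_val_three, Matrix.cons_val_four,
        Matrix.tail_cons, Matrix.cons_val]) <;> (first | exact iff_of_false (G.irrefl) (by decide) | exact iff_of_true e0 (by decide) | exact iff_of_true (G.adj_symm e0) (by decide) | exact iff_of_true e1 (by decide) | exact iff_of_true (G.adj_symm e1) (by decide) | exact iff_of_true e2 (by decide) | exact iff_of_true (G.adj_symm e2) (by decide) | exact iff_of_true e3 (by decide) | exact iff_of_true (G.adj_symm e3) (by decide) | exact iff_of_false d02 (by decide) | exact iff_of_false (fun hh => d02 (G.adj_symm hh)) (by decide) | exact iff_of_false d13 (by decide) | exact iff_of_false (fun hh => d13 (G.adj_symm hh)) (by decide)))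

lemma chordal_c5 (hch : IsChordalGraph G) {v0 v1 v2 v3 v4 : V}
    (e0 : G.Adj v0 v1) (e1 : G.Adj v1 v2) (e2 : G.Adj v2 v3) (e3 : G.Adj v3 v4) (e4 : G.Adj v4 v0) (d02 : ¬ G.Adj v0 v2) (d03 : ¬ G.Adj v0 v3) (d13 : ¬ G.Adj v1 v3) (d14 : ¬ G.Adj v1 v4) (d24 : ¬ G.Adj v2 v4) (n02 : v0 ≠ v2) (n03 : v0 ≠ v3) (n13 : v1 ≠ v3) (n14 : v1 ≠ v4) (n24 : v2 ≠ v4) : False := by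
  apply chordal_no_cycle hch (by norm_num) ![v0, v1, v2, v3, v4]
  · intro i j h
    fin_cases i <;> fin_cases j <;>
      (first | rfl | ((try simp at h) <;> (first | exact absurd h e0.ne | exact absurd h e0.ne.symm | exact absurd h e1.ne | exact absurd h e1.ne.symm | exact absurd h e2.ne | exact absurd h e2.ne.symm | exact absurd h e3.ne | exact absurd h e3.ne.symm | exact absurd h e4.ne | exact absurd h e4.ne.symm | exact absurd h n02 | exact absurd h n02.symm | exact absurd h n03 | exact absurd h n03.symm | exact absurd h n13 | exact absurd h n13.symm | exact absurd h n14 | exact absurd h n14.symm | exact absurd h n24 | exact absurd h n24.symm)))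
  · intro i j
    fin_cases i <;> fin_cases j <;>
      ((try simp only [Matrix.cons_val_zero, Matrix.cons_val_one, Matrix.head_cons,
        Matrix.cons_val_two, Matrix.cons_val_three, Matrix.cons_val_four,
        Matrix.tail_cons, Matrix.cons_val]) <;> (first | exact iff_of_false (G.irrefl) (by decide) | exact iff_of_true e0 (by decide) | exact iff_of_true (G.adj_symm e0) (by decide) | exact iff_of_true e1 (by decide) | exact iff_of_true (G.adj_symm e1) (by decide) | exact iff_of_true e2 (by decide) | exact iff_of_true (G.adj_symm e2) (by decide) | exact iff_of_true e3 (by decide) | exact iff_of_true (G.adj_symm e3) (by decide) | exact iff_of_true e4 (by decide) | exact iff_of_true (G.adj_symm e4) (by decide) | exact iff_of_false d02 (by decide) | exact iff_of_false (fun hh => d02 (G.adj_symm hh)) (by decide) | exact iff_of_false d03 (by decide) | exact iff_of_false (fun hh => d03 (G.adj_symm hh)) (by decide) | exact iff_of_false d13 (by decide) | exact iff_of_false (fun hh => d13 (G.adj_symm hh)) (by decide) | exact iff_of_false d14 (by decide) | exact iff_of_false (fun hh => d14 (G.adj_symm hh)) (by decide) | exact iff_of_false d24 (by decide) | exact iff_of_false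 (fun hh => d24 (G.adj_symm hh)) (by decide)))

lemma chordal_c6 (hch : IsChordalGraph G) {v0 v1 v2 v3 v4 v5 : V}
    (e0 : G.Adj v0 v1) (e1 : G.Adj v1 v2) (e2 : G.Adj v2 v3) (e3 : G.Adj v3 v4) (e4 : G.Adj v4 v5) (e5 : G.Adj v5 v0) (d02 : ¬ G.Adj v0 v2) (d03 : ¬ G.Adj v0 v3) (d04 : ¬ G.Adj v0 v4) (d13 : ¬ G.Adj v1 v3) (d14 : ¬ G.Adj v1 v4) (d15 : ¬ G.Adj v1 v5) (d24 : ¬ G.Adj v2 v4) (d25 : ¬ G.Adj v2 v5) (d35 : ¬ G.Adj v3 v5) (n02 : v0 ≠ v2) (n03 : v0 ≠ v3) (n04 : v0 ≠ v4) (n13 : v1 ≠ v3) (n14 : v1 ≠ v4) (n15 : v1 ≠ v5) (n24 : v2 ≠ v4) (n25 : v2 ≠ v5) (n35 : v3 ≠ v5) : False := by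
  apply chordal_no_cycle hch (by norm_num) ![v0, v1, v2, v3, v4, v5]
  · intro i j h
    fin_cases i <;> fin_cases j <;>
      (first | rfl | ((try simp at h) <;> (first | exact absurd h e0.ne | exact absurd h e0.ne.symm | exact absurd h e1.ne | exact absurd h e1.ne.symm | exact absurd h e2.ne | exact absurd h e2.ne.symm | exact absurd h e3.ne | exact absurd h e3.ne.symm | exact absurd h e4.ne | exact absurd h e4.ne.symm | exact absurd h e5.ne | exact absurd h e5.ne.symm | exact absurd h n02 | exact absurd h n02.symm | exact absurd h n03 | exact absurd h n03.symm | exact absurd h n04 | exact absurd h n04.symm | exact absurd h n13 | exact absurd h n13.symm | exact absurd h n14 | exact absurd h n14.symm | exact absurd h n15 | exact absurd h n15.symm | exact absurd h n24 | exact absurd h n24.symm | exact absurd h n25 | exact absurd h n25.symm | exact absurd h n35 | exact absurd h n35.symm)))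
  · intro i j
    fin_cases i <;> fin_cases j <;>
      ((try simp only [Matrix.cons_val_zero, Matrix.cons_val_one, Matrix.head_cons,
        Matrix.cons_val_two, Matrix.cons_val_three, Matrix.cons_val_four,
        Matrix.tail_cons, Matrix.cons_val]) <;> (first | exact iff_of_false (G.irrefl) (by decide) | exact iff_of_true e0 (by decide) | exact iff_of_true (G.adj_symm e0) (by decide) | exact iff_of_true e1 (by decide) | exact iff_of_true (G.adj_symm e1) (by decide) | exact iff_of_true e2 (by decide) | exact iff_of_true (G.adj_symm e2) (by decide) | exact iff_of_true e3 (by decide) | exact iff_of_true (G.adj_symm e3) (by decide) | exact iff_of_true e4 (by decide) | exact iff_of_true (G.adj_symm e4) (by decide) | exact iff_of_true e5 (by decide) | exact iff_of_true (G.adj_symm e5) (by decide) | exact iff_of_false d02 (by decide) | exact iff_of_false (fun hh => d02 (G.adj_symm hh)) (by decide) | exact iff_of_false d03 (by decide) | exact iff_of_false (fun hh => d03 (G.adj_symm hh)) (by decide) | exact iff_of_false d04 (by decide) | exact iff_of_false (fun hh => d04 (G.adj_symm hh)) (by decide) | exact iff_of_false d13 (by decide) | exact iff_of_false (fun hh =>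 d13 (G.adj_symm hh)) (by decide) | exact iff_of_false d14 (by decide) | exact iff_of_false (fun hh => d14 (G.adj_symm hh)) (by decide) | exact iff_of_false d15 (by decide) | exact iff_of_false (fun hh => d15 (G.adj_symm hh)) (by decide) | exact iff_of_false d24 (by decide) | exact iff_of_false (fun hh => d24 (G.adj_symm hh)) (by decide) | exact iff_of_false d25 (by decide) | exact iff_of_false (fun hh => d25 (G.adj_symm hh)) (by decide) | exact iff_of_false d35 (by decide) | exact iff_of_false (fun hh => d35 (G.adj_symm hh)) (by decide)))

lemma chordal_c7 (hch : IsChordalGraph G) {v0 v1 v2 v3 v4 v5 v6 : V}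
    (e0 : G.Adj v0 v1) (e1 : G.Adj v1 v2) (e2 : G.Adj v2 v3) (e3 : G.Adj v3 v4) (e4 : G.Adj v4 v5) (e5 : G.Adj v5 v6) (e6 : G.Adj v6 v0) (d02 : ¬ G.Adj v0 v2) (d03 : ¬ G.Adj v0 v3) (d04 : ¬ G.Adj v0 v4) (d05 : ¬ G.Adj v0 v5) (d13 : ¬ G.Adj v1 v3) (d14 : ¬ G.Adj v1 v4) (d15 : ¬ G.Adj v1 v5) (d16 : ¬ G.Adj v1 v6) (d24 : ¬ G.Adj v2 v4) (d25 : ¬ G.Adj v2 v5) (d26 : ¬ G.Adj v2 v6) (d35 : ¬ G.Adj v3 v5) (d36 : ¬ G.Adj v3 v6) (d46 : ¬ G.Adj v4 v6) (n02 : v0 ≠ v2) (n03 : v0 ≠ v3) (n04 : v0 ≠ v4) (n05 : v0 ≠ v5) (n13 : v1 ≠ v3) (n14 : v1 ≠ v4) (n15 : v1 ≠ v5) (n16 : v1 ≠ v6) (n24 : v2 ≠ v4) (n25 : v2 ≠ v5) (n26 : v2 ≠ v6) (n35 : v3 ≠ v5) (n36 : v3 ≠ v6) (n46 : v4 ≠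 v6) : False := by
  apply chordal_no_cycle hch (by norm_num) ![v0, v1, v2, v3, v4, v5, v6]
  · intro i j h
    fin_cases i <;> fin_cases j <;>
      (first | rfl | ((try simp at h) <;> (first | exact absurd h e0.ne | exact absurd h e0.ne.symm | exact absurd h e1.ne | exact absurd h e1.ne.symm | exact absurd h e2.ne | exact absurd h e2.ne.symm | exact absurd h e3.ne | exact absurd h e3.ne.symm | exact absurd h e4.ne | exact absurd h e4.ne.symm | exact absurd h e5.ne | exact absurd h e5.ne.symm | exact absurd h e6.ne | exact absurd h e6.ne.symm | exact absurd h n02 | exact absurd h n02.symm | exact absurd h n03 | exact absurd h n03.symm | exact absurd h n04 | exact absurd h n04.symm | exact absurd h n05 | exact absurd h n05.symm | exact absurd h n13 | exact absurd h n13.symm | exact absurd h n14 | exact absurd h n14.symm | exact absurd h n15 | exact absurd h n15.symm | exact absurd h n16 | exact absurd h n16.symm | exact absurd h n24 | exact absurd h n24.symm | exact absurd h n25 | exact absurd h n25.symm | exact absurd h n26 | exact absurd h n26.symm | exact absurd h n35 | exact absurd h n35.symm | exact absurd h n36 | exact absurd h n36.symm | exact absurd h n46 | exact absurd h n46.sy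mm)))
  · intro i j
    fin_cases i <;> fin_cases j <;>
      ((try simp only [Matrix.cons_val_zero, Matrix.cons_val_one, Matrix.head_cons,
        Matrix.cons_val_two, Matrix.cons_val_three, Matrix.cons_val_four,
        Matrix.tail_cons, Matrix.cons_val]) <;> (first | exact iff_of_false (G.irrefl) (by decide) | exact iff_of_true e0 (by decide) | exact iff_of_true (G.adj_symm e0) (by decide) | exact iff_of_true e1 (by decide) | exact iff_of_true (G.adj_symm e1) (by decide) | exact iff_of_true e2 (by decide) | exact iff_of_true (G.adj_symm e2) (by decide) | exact iff_of_true e3 (by decide) | exact iff_of_true (G.adj_symm e3) (by decide) | exact iff_of_true e4 (by decide) | exact iff_of_true (G.adj_symm e4) (by decide) | exact iff_of_true e5 (by decide) | exact iff_of_true (G.adj_symm e5) (by decide) | exact iff_of_true e6 (by decide) | exact iff_of_true (G.adj_symm e6) (by decide) | exact iff_of_false d02 (by decide) | exact iff_of_false (fun hh => d02 (G.adj_symm hh)) (by decide) | exact iff_of_false d03 (by decide) | exact iff_of_false (fun hh => d03 (G.adj_symm hh)) (by decide) | exact iff_of_false d04 (by decide) | exact iff_of_false (fun hh => d04 (G.adj_symm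 hh)) (by decide) | exact iff_of_false d05 (by decide) | exact iff_of_false (fun hh => d05 (G.adj_symm hh)) (by decide) | exact iff_of_false d13 (by decide) | exact iff_of_false (fun hh => d13 (G.adj_symm hh)) (by decide) | exact iff_of_false d14 (by decide) | exact iff_of_false (fun hh => d14 (G.adj_symm hh)) (by decide) | exact iff_of_false d15 (by decide) | exact iff_of_false (fun hh => d15 (G.adj_symm hh)) (by decide) | exact iff_of_false d16 (by decide) | exact iff_of_false (fun hh => d16 (G.adj_symm hh)) (by decide) | exact iff_of_false d24 (by decide) | exact iff_of_false (fun hh => d24 (G.adj_symm hh)) (by decide) | exact iff_of_false d25 (by decide) | exact iff_of_false (fun hh => d25 (G.adj_symm hh)) (by decide) | exact iff_of_false d26 (by decide) | exact iff_of_false (fun hh => d26 (G.adj_symm hh)) (by decide) | exact iff_of_false d35 (by decide) | exact iff_of_false (fun hh => d35 (G.adj_symm hh)) (by decide) | exact iff_of_false d36 (by decide) | exact iff_of_false (fun hh => d36 (G.adj_symm hh)) (by decide) | exact iff_of_false d46 (by decide) | exact iff_of_false (fun hh => d46 (G.adj_symm hh)) (by decide)))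

end Cycles

section CoreDev
variable {G : SimpleGraph V}

lemma maxIndep_of_dominating {A S : Finset V} (hS : IsIndepIn G A S)
    (hdom : ∀ t ∈ A, t ∉ S → ∃ m ∈ S, G.Adj m t) : IsMaxIndepIn G A S := by
  refine ⟨hS, ?_⟩
  intro T hT hST
  refine Finset.Subset.antisymm ?_ hST
  intro t ht
  by_contra htS
  obtain ⟨m, hm, hadj⟩ := hdom t (hT.1 ht) htS
  exact hT.2 m (hST hm) t ht hadj

theorem core_endgame (hch : IsChordalGraph G) {A M : Finset V} {u a b : V}
    (hwc : WellCoveredOn G A) (hM : IsMaxIndepIn G A M) (huM : u ∈ M)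
    (ha : a ∈ A) (hb : b ∈ A) (hua : G.Adj u a) (hub : G.Adj u b)
    (hab : ¬ G.Adj a b) (hne : a ≠ b)
    (hnp : ∀ y ∈ A, y ∉ M → G.Adj u y → ∃ m ∈ M, G.Adj m y ∧ m ≠ u)
    (hsplit : ∀ w ∈ M, w ≠ u → G.Adj a w ∨ G.Adj b w)
    (AA BB K : Finset V)
    (hAA : ∀ w, w ∈ AA ↔ w ∈ M ∧ w ≠ u ∧ G.Adj a w)
    (hBB : ∀ w, w ∈ BB ↔ w ∈ M ∧ w ≠ u ∧ G.Adj b w)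
    (hK : ∀ k, k ∈ K ↔ k ∈ A ∧ k ≠ a ∧ k ≠ b ∧ ¬ G.Adj a k ∧ ¬ G.Adj b k)
    (hdisjAB : ∀ w, w ∈ AA → w ∉ BB)
    (hKM : ∀ k ∈ K, k ∉ M)
    (hKu : ∀ k ∈ K, ¬ G.Adj u k)
    (huniq : ∀ k ∈ K, ∀ w, w ∈ AA ∪ BB → ∀ w', w' ∈ AA ∪ BB →
      G.Adj w k → G.Adj w' k → w = w')
    (hwitex : ∀ k ∈ K, ∃ w ∈ AA ∪ BB, G.Adj w k)
    (hcross : ∀ k₁ ∈ K, ∀ k₂ ∈ K, G.Adj k₁ k₂ → ∀ w ∈ AA ∪ BB, G.Adj w k₁ → G.Adj w k₂)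
    (hKmax : ∀ U, IsMaxIndepIn G K U → U.card + 2 = M.card)
    (hMcard : M.card = 1 + AA.card + BB.card)
    (w₀ : V) (hw₀AA : w₀ ∈ AA) (hw₀e : ∀ k ∈ K, ¬ G.Adj w₀ k)
    (honly : ∀ w ∈ AA ∪ BB, (∀ k ∈ K, ¬ G.Adj w k) → w = w₀) : False := by
  classical
  have hMsub : M ⊆ A := hM.1.1
  have huA : u ∈ A := hMsub huM
  have haM : a ∉ M := fun h => hM.1.2 u huM a h hua
  have hbM : b ∉ M := fun h => hM.1.2 u huM b h hub
  obtain ⟨hw₀M, hw₀u, haw₀⟩ := (hAA w₀).1 hw₀AA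
  have hBBne : BB.Nonempty := by
    obtain ⟨m, hmM, hmb, hmu⟩ := hnp b hb hbM hub
    exact ⟨m, (hBB m).2 ⟨hmM, hmu, G.adj_symm hmb⟩⟩
  set KB := K.filter (fun k => ∀ w ∈ BB, ¬ G.Adj w k) with hKBdef
  have hKBmem : ∀ k, k ∈ KB ↔ k ∈ K ∧ ∀ w ∈ BB, ¬ G.Adj w k := by
    intro k; simp [hKBdef, Finset.mem_filter]
  -- (ii) every maximal independent subset of KB has card M.card - BB.card - 1
  have hKBmax : ∀ U₂, IsMaxIndepIn G KB U₂ → 1 + BB.card + U₂.card = M.card := by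
    intro U₂ hU₂
    have hU₂K : ∀ k ∈ U₂, k ∈ K := fun k hk => ((hKBmem k).1 (hU₂.1.1 hk)).1
    have hU₂B : ∀ k ∈ U₂, ∀ w ∈ BB, ¬ G.Adj w k := fun k hk => ((hKBmem k).1 (hU₂.1.1 hk)).2
    have hnadjaBB : ∀ w ∈ BB, ¬ G.Adj a w := by
      intro w hw h
      obtain ⟨hwM, hwu, -⟩ := (hBB w).1 hw
      exact hdisjAB w ((hAA w).2 ⟨hwM, hwu, h⟩) hw
    have hWmax : IsMaxIndepIn G A (insert a (BB ∪ U₂)) := by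
      apply maxIndep_of_dominating
      · constructor
        · intro x hx
          rcases Finset.mem_insert.1 hx with h | h
          · exact h ▸ ha
          rcases Finset.mem_union.1 h with h' | h'
          · exact hMsub ((hBB x).1 h').1
          · exact ((hK x).1 (hU₂K x h')).1
        · intro p hp q hq
          rcases Finset.mem_insert.1 hp with hpa | hp'
          · subst hpa
            rcases Finset.mem_insert.1 hq with hqa | hq'
            · subst hqa; exact G.irrefl
            rcases Finset.mem_union.1 hq' with h' | h'
            · exact hnadjaBB q h'
            · exact ((hK q).1 (hU₂K q h')).2.2.2.1
          · rcases Finset.mem_insert.1 hq with hqa | hq'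
            · subst hqa
              rcases Finset.mem_union.1 hp' with h' | h'
              · exact fun h => hnadjaBB p h' (G.adj_symm h)
              · exact fun h => ((hK p).1 (hU₂K p h')).2.2.2.1 (G.adj_symm h)
            · rcases Finset.mem_union.1 hp' with h1 | h1 <;> rcases Finset.mem_union.1 hq' with h2 | h2
              · exact hM.1.2 p ((hBB p).1 h1).1 q ((hBB q).1 h2).1
              · exact hU₂B q h2 p h1
              · exact fun h => hU₂B p h1 q h2 (G.adj_symm h)
              · exact hU₂.1.2 p h1 q h2
      · intro t htA htni
        by_cases hat : G.Adj a t
        · exact ⟨a, Finset.mem_insert_self _ _, hat⟩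
        have hta : t ≠ a := fun h => htni (h ▸ Finset.mem_insert_self _ _)
        by_cases hbt : G.Adj b t
        · by_cases htM : t ∈ M
          · have htu : t ≠ u := fun h => hat (h ▸ G.adj_symm hua)
            exact absurd (Finset.mem_insert_of_mem (Finset.mem_union_left _
              ((hBB t).2 ⟨htM, htu, hbt⟩))) htni
          · by_cases hut : G.Adj u t
            · obtain ⟨m, hmM, hmt, hmu⟩ := hnp t htA htM hut
              by_cases hmBB : m ∈ BB
              · exact ⟨m, Finset.mem_insert_of_mem (Finset.mem_union_left _ hmBB), hmt⟩
              · have hmAA : m ∈ AA := by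
                  rcases hsplit m hmM hmu with h | h
                  · exact (hAA m).2 ⟨hmM, hmu, h⟩
                  · exact absurd ((hBB m).2 ⟨hmM, hmu, h⟩) hmBB
                have ham : G.Adj a m := ((hAA m).1 hmAA).2.2
                exact (chordal_c4 hch (G.adj_symm hmt) (G.adj_symm ham) (G.adj_symm hua) hut
                  (fun h => hat (G.adj_symm h)) (hM.1.2 m hmM u huM) hta hmu).elim
            · obtain ⟨m, hmM, hmt⟩ := maxIndep_dominates hM htA htM
              have hmu : m ≠ u := fun h => hut (h ▸ hmt)
              by_cases hmBB : m ∈ BB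
              · exact ⟨m, Finset.mem_insert_of_mem (Finset.mem_union_left _ hmBB), hmt⟩
              · have hmAA : m ∈ AA := by
                  rcases hsplit m hmM hmu with h | h
                  · exact (hAA m).2 ⟨hmM, hmu, h⟩
                  · exact absurd ((hBB m).2 ⟨hmM, hmu, h⟩) hmBB
                have ham : G.Adj a m := ((hAA m).1 hmAA).2.2
                exact (chordal_c5 hch (G.adj_symm hmt) (G.adj_symm ham) (G.adj_symm hua) hub hbt
                  (fun h => hat (G.adj_symm h)) (fun h => hut (G.adj_symm h)) (hM.1.2 m hmM u huM)
                  (fun h => hdisjAB m hmAA ((hBB m).2 ⟨hmM, hmu, G.adj_symm h⟩)) hab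
                  hta (fun h => htM (h ▸ huM)) hmu (fun h => hbM (h ▸ hmM)) hne).elim
        · by_cases htb : t = b
          · obtain ⟨m', hm'⟩ := hBBne
            exact ⟨m', Finset.mem_insert_of_mem (Finset.mem_union_left _ hm'),
              htb ▸ G.adj_symm ((hBB m').1 hm').2.2⟩
          · have htK : t ∈ K := (hK t).2 ⟨htA, hta, htb, hat, hbt⟩
            by_cases hBBadj : ∃ w ∈ BB, G.Adj w t
            · obtain ⟨w, hw, hwt⟩ := hBBadj
              exact ⟨w, Finset.mem_insert_of_mem (Finset.mem_union_left _ hw), hwt⟩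
            · push_neg at hBBadj
              have htKB : t ∈ KB := (hKBmem t).2 ⟨htK, hBBadj⟩
              have htU₂ : t ∉ U₂ := fun h =>
                htni (Finset.mem_insert_of_mem (Finset.mem_union_right _ h))
              obtain ⟨m, hmU₂, hmt⟩ := maxIndep_dominates hU₂ htKB htU₂
              exact ⟨m, Finset.mem_insert_of_mem (Finset.mem_union_right _ hmU₂), hmt⟩
    have hc := hwc _ _ hWmax hM
    have haBU : a ∉ BB ∪ U₂ := by
      intro h
      rcases Finset.mem_union.1 h with h' | h'
      · exact haM ((hBB a).1 h').1
      · exact ((hK a).1 (hU₂K a h')).2.1 rfl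
    have hdisjBU : Disjoint BB U₂ := Finset.disjoint_left.2 (by
      intro w hw hwU
      exact hKM w (hU₂K w hwU) ((hBB w).1 hw).1)
    rw [Finset.card_insert_of_notMem haBU, Finset.card_union_of_disjoint hdisjBU] at hc
    omega
  -- transversal of AA.erase w₀ inside KB
  have hAAw : ∀ w : {x // x ∈ AA.erase w₀}, ∃ k, k ∈ KB ∧ G.Adj w.1 k := by
    rintro ⟨w, hw⟩
    obtain ⟨hww₀, hwAA⟩ := Finset.mem_erase.1 hw
    have hne' : ¬ ∀ k ∈ K, ¬ G.Adj w k := fun hempty =>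
      hww₀ (honly w (Finset.mem_union_left _ hwAA) hempty)
    push_neg at hne'
    obtain ⟨k, hkK, hwk⟩ := hne'
    refine ⟨k, (hKBmem k).2 ⟨hkK, ?_⟩, hwk⟩
    intro w' hw' hw't
    have heq := huniq k hkK w (Finset.mem_union_left _ hwAA) w'
      (Finset.mem_union_right _ hw') hwk hw't
    have hwBB : w ∈ BB := by rw [heq]; exact hw'
    exact hdisjAB w hwAA hwBB
  set pick₂ : {x // x ∈ AA.erase w₀} → V := fun w => (hAAw w).choose with hp2def
  have hp2KB : ∀ w, pick₂ w ∈ KB := fun w => (hAAw w).choose_spec.1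
  have hp2adj : ∀ w, G.Adj w.1 (pick₂ w) := fun w => (hAAw w).choose_spec.2
  have hp2K : ∀ w, pick₂ w ∈ K := fun w => ((hKBmem _).1 (hp2KB w)).1
  have hp2inj : Function.Injective pick₂ := by
    intro w w' h
    apply Subtype.ext
    exact huniq (pick₂ w) (hp2K w) w.1
      (Finset.mem_union_left _ (Finset.mem_of_mem_erase w.2)) w'.1
      (Finset.mem_union_left _ (Finset.mem_of_mem_erase w'.2)) (hp2adj w) (h ▸ hp2adj w')
  set T₂ := (AA.erase w₀).attach.image pick₂ with hT₂def
  have hT₂card : T₂.card = AA.card - 1 := by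
    rw [hT₂def, Finset.card_image_of_injective _ hp2inj, Finset.card_attach,
      Finset.card_erase_of_mem hw₀AA]
  have hT₂indep : IsIndepIn G KB T₂ := by
    constructor
    · intro k hk
      obtain ⟨w, -, rfl⟩ := Finset.mem_image.1 hk
      exact hp2KB w
    · intro p hp q hq hadj
      obtain ⟨w, -, rfl⟩ := Finset.mem_image.1 hp
      obtain ⟨w', -, rfl⟩ := Finset.mem_image.1 hq
      have hww' : w ≠ w' := fun h => G.irrefl (h ▸ hadj)
      have := hcross (pick₂ w) (hp2K w) (pick₂ w') (hp2K w') hadj w.1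
        (Finset.mem_union_left _ (Finset.mem_of_mem_erase w.2)) (hp2adj w)
      exact hww' (Subtype.ext (huniq (pick₂ w') (hp2K w') w.1
        (Finset.mem_union_left _ (Finset.mem_of_mem_erase w.2)) w'.1
        (Finset.mem_union_left _ (Finset.mem_of_mem_erase w'.2)) this (hp2adj w')))
  obtain ⟨U₂, hT₂sub, hU₂⟩ := exists_maxIndep_ext hT₂indep
  have hU₂card := hKBmax U₂ hU₂
  have hAApos : 0 < AA.card := Finset.card_pos.2 ⟨w₀, hw₀AA⟩
  have hkex : ∃ k, k ∈ U₂ ∧ k ∉ T₂ := by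
    by_contra hcon
    push_neg at hcon
    have hle := Finset.card_le_card (fun k hk => hcon k hk)
    omega
  obtain ⟨kstar, hkU₂, hkT₂⟩ := hkex
  have hkKB : kstar ∈ KB := hU₂.1.1 hkU₂
  have hkK : kstar ∈ K := ((hKBmem kstar).1 hkKB).1
  obtain ⟨wstar, hwsmem, hwsk⟩ := hwitex kstar hkK
  have hwsAA : wstar ∈ AA := by
    rcases Finset.mem_union.1 hwsmem with h | h
    · exact h
    · exact absurd hwsk (((hKBmem kstar).1 hkKB).2 wstar h)
  have hwsw₀ : wstar ≠ w₀ := fun h => hw₀e kstar hkK (h ▸ hwsk)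
  have hwserase : wstar ∈ AA.erase w₀ := Finset.mem_erase.2 ⟨hwsw₀, hwsAA⟩
  set kws := pick₂ ⟨wstar, hwserase⟩ with hkwsdef
  have hkwsT₂ : kws ∈ T₂ := by
    rw [hT₂def]
    exact Finset.mem_image.2 ⟨⟨wstar, hwserase⟩, Finset.mem_attach _ _, rfl⟩
  have hkne : kstar ≠ kws := fun h => hkT₂ (h ▸ hkwsT₂)
  have hknadj : ¬ G.Adj kstar kws := hU₂.1.2 kstar hkU₂ kws (hT₂sub hkwsT₂)
  have hkwsadj : G.Adj wstar kws := hp2adj ⟨wstar, hwserase⟩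
  have hkwsK : kws ∈ K := hp2K ⟨wstar, hwserase⟩
  -- final transversal
  have hw₀AB : w₀ ∈ AA ∪ BB := Finset.mem_union_left _ hw₀AA
  have hwsAB' : wstar ∈ (AA ∪ BB).erase w₀ :=
    Finset.mem_erase.2 ⟨hwsw₀, Finset.mem_union_left _ hwsAA⟩
  have hT4w : ∀ w : {x // x ∈ ((AA ∪ BB).erase w₀).erase wstar}, ∃ k, k ∈ K ∧ G.Adj w.1 k := by
    rintro ⟨w, hw⟩
    have hw1 := Finset.mem_of_mem_erase hw
    have hww₀ := Finset.ne_of_mem_erase hw1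
    have hwmem := Finset.mem_of_mem_erase hw1
    have hne' : ¬ ∀ k ∈ K, ¬ G.Adj w k := fun hempty => hww₀ (honly w hwmem hempty)
    push_neg at hne'
    exact hne'
  set pick₄ : {x // x ∈ ((AA ∪ BB).erase w₀).erase wstar} → V :=
    fun w => (hT4w w).choose with hp4def
  have hp4K : ∀ w, pick₄ w ∈ K := fun w => (hT4w w).choose_spec.1
  have hp4adj : ∀ w, G.Adj w.1 (pick₄ w) := fun w => (hT4w w).choose_spec.2
  have hmemAB : ∀ w : {x // x ∈ ((AA ∪ BB).erase w₀).erase wstar}, w.1 ∈ AA ∪ BB :=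
    fun w => Finset.mem_of_mem_erase (Finset.mem_of_mem_erase w.2)
  have hp4inj : Function.Injective pick₄ := by
    intro w w' h
    apply Subtype.ext
    exact huniq (pick₄ w) (hp4K w) w.1 (hmemAB w) w'.1 (hmemAB w') (hp4adj w) (h ▸ hp4adj w')
  set T₄ := (((AA ∪ BB).erase w₀).erase wstar).attach.image pick₄ with hT₄def
  have hABcard : (AA ∪ BB).card = AA.card + BB.card :=
    Finset.card_union_of_disjoint (Finset.disjoint_left.2 hdisjAB)
  have hT₄card : T₄.card = AA.card + BB.card - 2 := by
    rw [hT₄def, Finset.card_image_of_injective _ hp4inj, Finset.card_attach,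
      Finset.card_erase_of_mem hwsAB', Finset.card_erase_of_mem hw₀AB, hABcard]
    omega
  have hAA2 : 2 ≤ AA.card := Finset.one_lt_card.2 ⟨w₀, hw₀AA, wstar, hwsAA, Ne.symm hwsw₀⟩
  -- kstar and kws are not in T₄ and not adjacent to it
  have hwsT₄ : ∀ w : {x // x ∈ ((AA ∪ BB).erase w₀).erase wstar}, ∀ kk,
      kk ∈ K → G.Adj wstar kk → ¬ G.Adj kk (pick₄ w) ∧ kk ≠ pick₄ w := by
    intro w kk hkkK hadjws
    constructor
    · intro hadj
      have := hcross kk hkkK (pick₄ w) (hp4K w) hadj wstar hwsmem hadjws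
      exact (Finset.ne_of_mem_erase w.2).symm
        (huniq (pick₄ w) (hp4K w) wstar hwsmem w.1 (hmemAB w) this (hp4adj w))
    · intro heq
      exact (Finset.ne_of_mem_erase w.2).symm
        (huniq (pick₄ w) (hp4K w) wstar hwsmem w.1 (hmemAB w) (heq ▸ hadjws) (hp4adj w))
  set T₃ := insert kstar (insert kws T₄) with hT₃def
  have hkwsT₄ : kws ∉ T₄ := by
    intro h
    obtain ⟨w, -, heq⟩ := Finset.mem_image.1 h
    exact (hwsT₄ w kws hkwsK hkwsadj).2 heq.symm
  have hkstarT₄ : kstar ∉ T₄ := by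
    intro h
    obtain ⟨w, -, heq⟩ := Finset.mem_image.1 h
    exact (hwsT₄ w kstar hkK hwsk).2 heq.symm
  have hT₃indep : IsIndepIn G K T₃ := by
    rw [hT₃def]
    apply indepIn_insert
    apply indepIn_insert
    · constructor
      · intro k hk
        obtain ⟨w, -, rfl⟩ := Finset.mem_image.1 hk
        exact hp4K w
      · intro p hp q hq hadj
        obtain ⟨w, -, rfl⟩ := Finset.mem_image.1 hp
        obtain ⟨w', -, rfl⟩ := Finset.mem_image.1 hq
        have hww' : w ≠ w' := fun h => G.irrefl (h ▸ hadj)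
        have := hcross (pick₄ w) (hp4K w) (pick₄ w') (hp4K w') hadj w.1 (hmemAB w) (hp4adj w)
        exact hww' (Subtype.ext (huniq (pick₄ w') (hp4K w') w.1 (hmemAB w) w'.1 (hmemAB w')
          this (hp4adj w')))
    · exact hkwsK
    · intro y hy
      obtain ⟨w, -, rfl⟩ := Finset.mem_image.1 hy
      exact (hwsT₄ w kws hkwsK hkwsadj).1
    · exact hkK
    · intro y hy
      rcases Finset.mem_insert.1 hy with h | h
      · exact h ▸ hknadj
      · obtain ⟨w, -, rfl⟩ := Finset.mem_image.1 h
        exact (hwsT₄ w kstar hkK hwsk).1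
  have hT₃card : T₃.card = T₄.card + 2 := by
    rw [hT₃def, Finset.card_insert_of_notMem, Finset.card_insert_of_notMem hkwsT₄]
    intro h
    rcases Finset.mem_insert.1 h with h' | h'
    · exact hkne h'
    · exact hkstarT₄ h'
  obtain ⟨Uf, hT₃sub, hUf⟩ := exists_maxIndep_ext hT₃indep
  have hfinal := hKmax Uf hUf
  have hle := Finset.card_le_card hT₃sub
  have hBB1 : 1 ≤ BB.card := Finset.card_pos.2 hBBne
  omega

/-- THE CORE: in a chordal well-covered graph, a maximal independent set M containing a
vertex u with two nonadjacent neighbours cannot lack an external private neighbour of u. -/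
theorem core_no_private (hch : IsChordalGraph G) :
    ∀ (n : ℕ) (A : Finset V), A.card ≤ n → WellCoveredOn G A → ∀ (M : Finset V) (u a b : V),
    IsMaxIndepIn G A M → u ∈ M → a ∈ A → b ∈ A → G.Adj u a → G.Adj u b →
    ¬ G.Adj a b → a ≠ b →
    (∀ y ∈ A, y ∉ M → G.Adj u y → ∃ m ∈ M, G.Adj m y ∧ m ≠ u) → False := by
  classical
  intro n
  induction n with
  | zero =>
    intro A hA _ M u a b hM huM _ _ _ _ _ _ _
    have : A = ∅ := Finset.card_eq_zero.1 (Nat.le_zero.1 hA)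
    exact absurd (hM.1.1 huM) (by simp [this])
  | succ n ih =>
    intro A hAcard hwc M u a b hM huM ha hb hua hub hab hne hnp
    have hMsub : M ⊆ A := hM.1.1
    have huA : u ∈ A := hMsub huM
    have haM : a ∉ M := fun h => hM.1.2 u huM a h hua
    have hbM : b ∉ M := fun h => hM.1.2 u huM b h hub
    -- STEP 1: reduce to the case M \ {u} ⊆ N(a) ∪ N(b)
    by_cases hstep1 : ∃ w ∈ M, w ≠ u ∧ ¬ G.Adj a w ∧ ¬ G.Adj b w
    · obtain ⟨w, hwM, hwu, hwa, hwb⟩ := hstep1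
      set A' := delClosedNbhd G A w with hA'def
      have hmemA' : ∀ y, y ∈ A' ↔ y ∈ A ∧ y ≠ w ∧ ¬ G.Adj w y := fun y => mem_delClosedNbhd
      have hwA : w ∈ A := hMsub hwM
      have hA'wc : WellCoveredOn G A' := wcOn_delClosedNbhd hwc hwA
      have hM' : IsMaxIndepIn G A' (M.erase w) := by
        refine maxIndep_of_dominating ⟨?_, ?_⟩ ?_
        · intro m hm
          obtain ⟨hmw, hmM⟩ := Finset.mem_erase.1 hm
          exact (hmemA' m).2 ⟨hMsub hmM, hmw, hM.1.2 w hwM m hmM⟩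
        · intro p hp q hq
          exact hM.1.2 p (Finset.mem_of_mem_erase hp) q (Finset.mem_of_mem_erase hq)
        · intro t ht htM'
          have htA : t ∈ A := ((hmemA' t).1 ht).1
          have htw : ¬ G.Adj w t := ((hmemA' t).1 ht).2.2
          have htM : t ∉ M := by
            intro h
            exact htM' (Finset.mem_erase.2 ⟨((hmemA' t).1 ht).2.1, h⟩)
          obtain ⟨m, hmM, hmt⟩ := maxIndep_dominates hM htA htM
          have hmw : m ≠ w := fun h => htw (h ▸ hmt)
          exact ⟨m, Finset.mem_erase.2 ⟨hmw, hmM⟩, hmt⟩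
      have hcard' : A'.card ≤ n := by
        have hlt : A'.card < A.card :=
          Finset.card_lt_card (Finset.filter_ssubset.mpr ⟨w, hwA, by simp⟩)
        omega
      refine ih A' hcard' hA'wc (M.erase w) u a b hM' ?_ ?_ ?_ hua hub hab hne ?_
      · exact Finset.mem_erase.2 ⟨fun h => hwu h.symm, huM⟩
      · exact (hmemA' a).2 ⟨ha, fun h => haM (h ▸ hwM), fun h => hwa (G.adj_symm h)⟩
      · exact (hmemA' b).2 ⟨hb, fun h => hbM (h ▸ hwM), fun h => hwb (G.adj_symm h)⟩
      · intro y hy hyM' hadj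
        have hyA : y ∈ A := ((hmemA' y).1 hy).1
        have hyw : ¬ G.Adj w y := ((hmemA' y).1 hy).2.2
        have hyM : y ∉ M := by
          intro h
          exact hyM' (Finset.mem_erase.2 ⟨((hmemA' y).1 hy).2.1, h⟩)
        obtain ⟨m, hmM, hmy, hmu⟩ := hnp y hyA hyM hadj
        have hmw : m ≠ w := fun h => hyw (h ▸ hmy)
        exact ⟨m, Finset.mem_erase.2 ⟨hmw, hmM⟩, hmy, hmu⟩
    · -- STEP 2: structured configuration
      push_neg at hstep1
      have hsplit : ∀ w ∈ M, w ≠ u → G.Adj a w ∨ G.Adj b w := by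
        intro w hwM hwu
        by_cases h : G.Adj a w
        · exact Or.inl h
        · exact Or.inr (hstep1 w hwM hwu h)
      set AA := M.filter (fun w => w ≠ u ∧ G.Adj a w) with hAAdef
      set BB := M.filter (fun w => w ≠ u ∧ G.Adj b w) with hBBdef
      set K := A.filter (fun k => k ≠ a ∧ k ≠ b ∧ ¬ G.Adj a k ∧ ¬ G.Adj b k) with hKdef
      have hAA : ∀ w, w ∈ AA ↔ w ∈ M ∧ w ≠ u ∧ G.Adj a w := by
        intro w; simp [hAAdef, Finset.mem_filter, and_assoc]
      have hBB : ∀ w, w ∈ BB ↔ w ∈ M ∧ w ≠ u ∧ G.Adj b w := by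
        intro w; simp [hBBdef, Finset.mem_filter, and_assoc]
      have hK : ∀ k, k ∈ K ↔ k ∈ A ∧ k ≠ a ∧ k ≠ b ∧ ¬ G.Adj a k ∧ ¬ G.Adj b k := by
        intro k; simp [hKdef, Finset.mem_filter, and_assoc]
      clear hAAdef hBBdef hKdef
      -- (2a) AA and BB are disjoint
      have hdisjAB : ∀ w, w ∈ AA → w ∉ BB := by
        intro w hwAA hwBB
        obtain ⟨hwM, hwu, haw⟩ := (hAA w).1 hwAA
        obtain ⟨-, -, hbw⟩ := (hBB w).1 hwBB
        exact chordal_c4 hch hua haw (G.adj_symm hbw) (G.adj_symm hub)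
          (hM.1.2 u huM w hwM) hab (Ne.symm hwu) hne
      have hKM : ∀ k ∈ K, k ∉ M := by
        intro k hk hkM
        obtain ⟨kA, kna, knb, hak, hbk⟩ := (hK k).1 hk
        by_cases hku : k = u
        · exact hak (hku ▸ G.adj_symm hua)
        · rcases hsplit k hkM hku with h | h
          · exact hak h
          · exact hbk h
      -- (W1) no K-vertex is adjacent to u
      have hKu : ∀ k ∈ K, ¬ G.Adj u k := by
        intro k hk hadj
        obtain ⟨kA, kna, knb, hak, hbk⟩ := (hK k).1 hk
        obtain ⟨m, hmM, hmk, hmu⟩ := hnp k kA (hKM k hk) hadj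
        rcases hsplit m hmM hmu with ham | hbm
        · exact chordal_c4 hch (G.adj_symm hadj) hua ham hmk (fun h => hak (G.adj_symm h))
            (hM.1.2 u huM m hmM) kna (Ne.symm hmu)
        · exact chordal_c4 hch (G.adj_symm hadj) hub hbm hmk (fun h => hbk (G.adj_symm h))
            (hM.1.2 u huM m hmM) knb (Ne.symm hmu)
      -- (W2/W3) witness uniqueness
      have huniq : ∀ k ∈ K, ∀ w, w ∈ AA ∪ BB → ∀ w', w' ∈ AA ∪ BB →
          G.Adj w k → G.Adj w' k → w = w' := by
        have hAAcase : ∀ k ∈ K, ∀ w ∈ AA, ∀ w' ∈ AA, G.Adj w k → G.Adj w' k → w = w' := by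
          intro k hk w hw w' hw' hwk hw'k
          by_contra hne'
          obtain ⟨kA, kna, knb, hak, hbk⟩ := (hK k).1 hk
          obtain ⟨hwM, hwu, haw⟩ := (hAA w).1 hw
          obtain ⟨hw'M, hw'u, haw'⟩ := (hAA w').1 hw'
          exact chordal_c4 hch (G.adj_symm hwk) (G.adj_symm haw) haw' hw'k
            (fun h => hak (G.adj_symm h)) (hM.1.2 w hwM w' hw'M) kna hne'
        have hBBcase : ∀ k ∈ K, ∀ w ∈ BB, ∀ w' ∈ BB, G.Adj w k → G.Adj w' k → w = w' := by
          intro k hk w hw w' hw' hwk hw'k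
          by_contra hne'
          obtain ⟨kA, kna, knb, hak, hbk⟩ := (hK k).1 hk
          obtain ⟨hwM, hwu, hbw⟩ := (hBB w).1 hw
          obtain ⟨hw'M, hw'u, hbw'⟩ := (hBB w').1 hw'
          exact chordal_c4 hch (G.adj_symm hwk) (G.adj_symm hbw) hbw' hw'k
            (fun h => hbk (G.adj_symm h)) (hM.1.2 w hwM w' hw'M) knb hne'
        have hABcase : ∀ k ∈ K, ∀ w ∈ AA, ∀ w' ∈ BB, G.Adj w k → G.Adj w' k → False := by
          intro k hk w hw w' hw' hwk hw'k
          obtain ⟨kA, kna, knb, hak, hbk⟩ := (hK k).1 hk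
          obtain ⟨hwM, hwu, haw⟩ := (hAA w).1 hw
          obtain ⟨hw'M, hw'u, hbw'⟩ := (hBB w').1 hw'
          -- C6 : k w a u b w'
          refine chordal_c6 hch (G.adj_symm hwk) (G.adj_symm haw) (G.adj_symm hua) hub hbw' hw'k
            (fun h => hak (G.adj_symm h)) (fun h => hKu k hk (G.adj_symm h)) (fun h => hbk (G.adj_symm h))
            (hM.1.2 w hwM u huM)
            (fun h => hdisjAB w hw ((hBB w).2 ⟨hwM, hwu, G.adj_symm h⟩))
            (hM.1.2 w hwM w' hw'M) hab
            (fun h => hdisjAB w' ((hAA w').2 ⟨hw'M, hw'u, h⟩) hw')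
            (hM.1.2 u huM w' hw'M)
            kna (fun h => hKM k hk (h ▸ huM)) knb
            hwu (fun h => hbM (h ▸ hwM)) ?_ hne
            (fun h => haM (h ▸ hw'M)) (Ne.symm hw'u)
          · intro h
            exact hdisjAB w hw (h ▸ hw')
        intro k hk w hw w' hw' hwk hw'k
        rcases Finset.mem_union.1 hw with h1 | h1 <;> rcases Finset.mem_union.1 hw' with h2 | h2
        · exact hAAcase k hk w h1 w' h2 hwk hw'k
        · exact absurd (hABcase k hk w h1 w' h2 hwk hw'k) not_false
        · exact absurd (hABcase k hk w' h2 w h1 hw'k hwk) not_false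
        · exact hBBcase k hk w h1 w' h2 hwk hw'k
      -- every K-vertex has a witness
      have hwitex : ∀ k ∈ K, ∃ w ∈ AA ∪ BB, G.Adj w k := by
        intro k hk
        obtain ⟨kA, -, -, -, -⟩ := (hK k).1 hk
        obtain ⟨m, hmM, hmk⟩ := maxIndep_dominates hM kA (hKM k hk)
        have hmu : m ≠ u := fun h => hKu k hk (h ▸ hmk)
        rcases hsplit m hmM hmu with h | h
        · exact ⟨m, Finset.mem_union_left _ ((hAA m).2 ⟨hmM, hmu, h⟩), hmk⟩
        · exact ⟨m, Finset.mem_union_right _ ((hBB m).2 ⟨hmM, hmu, h⟩), hmk⟩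
      -- (W4) adjacent K-vertices share witnesses
      have hcross : ∀ k₁ ∈ K, ∀ k₂ ∈ K, G.Adj k₁ k₂ → ∀ w ∈ AA ∪ BB,
          G.Adj w k₁ → G.Adj w k₂ := by
        intro k₁ hk₁ k₂ hk₂ h12 w hw hwk₁
        by_contra hnwk₂
        obtain ⟨w₂, hw₂, hw₂k₂⟩ := hwitex k₂ hk₂
        have hww₂ : w ≠ w₂ := fun h => hnwk₂ (h ▸ hw₂k₂)
        obtain ⟨k₁A, k₁na, k₁nb, hak₁, hbk₁⟩ := (hK k₁).1 hk₁
        obtain ⟨k₂A, k₂na, k₂nb, hak₂, hbk₂⟩ := (hK k₂).1 hk₂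
        have hnk₁w₂ : ¬ G.Adj k₁ w₂ := fun h =>
          hww₂ (huniq k₁ hk₁ w hw w₂ hw₂ hwk₁ (G.adj_symm h))
        have hk₁M := hKM k₁ hk₁
        have hk₂M := hKM k₂ hk₂
        rcases Finset.mem_union.1 hw with h1 | h1 <;> rcases Finset.mem_union.1 hw₂ with h2 | h2
        · -- both AA : C5 (k₁ k₂ w₂ a w)
          obtain ⟨hwM, hwu, haw⟩ := (hAA w).1 h1
          obtain ⟨hw₂M, hw₂u, haw₂⟩ := (hAA w₂).1 h2
          exact chordal_c5 hch h12 (G.adj_symm hw₂k₂) (G.adj_symm haw₂) haw hwk₁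
            hnk₁w₂ (fun h => hak₁ (G.adj_symm h)) (fun h => hak₂ (G.adj_symm h))
            (fun h => hnwk₂ (G.adj_symm h)) (hM.1.2 w₂ hw₂M w hwM)
            (fun h => hk₁M (h ▸ hw₂M)) k₁na k₂na (fun h => hk₂M (h ▸ hwM)) (Ne.symm hww₂)
        · -- w ∈ AA, w₂ ∈ BB : C7 (k₂ k₁ w a u b w₂)
          obtain ⟨hwM, hwu, haw⟩ := (hAA w).1 h1
          obtain ⟨hw₂M, hw₂u, hbw₂⟩ := (hBB w₂).1 h2
          refine chordal_c7 hch (G.adj_symm h12) (G.adj_symm hwk₁) (G.adj_symm haw) (G.adj_symm hua) hub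
            hbw₂ hw₂k₂
            (fun h => hnwk₂ (G.adj_symm h)) (fun h => hak₂ (G.adj_symm h))
            (fun h => hKu k₂ hk₂ (G.adj_symm h)) (fun h => hbk₂ (G.adj_symm h))
            (fun h => hak₁ (G.adj_symm h)) (fun h => hKu k₁ hk₁ (G.adj_symm h))
            (fun h => hbk₁ (G.adj_symm h)) hnk₁w₂
            (hM.1.2 w hwM u huM)
            (fun h => hdisjAB w h1 ((hBB w).2 ⟨hwM, hwu, G.adj_symm h⟩))
            (hM.1.2 w hwM w₂ hw₂M) hab
            (fun h => hdisjAB w₂ ((hAA w₂).2 ⟨hw₂M, hw₂u, h⟩) h2)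
            (hM.1.2 u huM w₂ hw₂M)
            (fun h => hk₂M (h ▸ hwM)) k₂na (fun h => hk₂M (h ▸ huM)) k₂nb
            k₁na (fun h => hk₁M (h ▸ huM)) k₁nb (fun h => hk₁M (h ▸ hw₂M))
            hwu (fun h => hbM (h ▸ hwM)) hww₂ hne
            (fun h => haM (h ▸ hw₂M)) (Ne.symm hw₂u)
        · -- w ∈ BB, w₂ ∈ AA : C7 (k₂ k₁ w b u a w₂)
          obtain ⟨hwM, hwu, hbw⟩ := (hBB w).1 h1
          obtain ⟨hw₂M, hw₂u, haw₂⟩ := (hAA w₂).1 h2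
          refine chordal_c7 hch (G.adj_symm h12) (G.adj_symm hwk₁) (G.adj_symm hbw) (G.adj_symm hub) hua
            haw₂ hw₂k₂
            (fun h => hnwk₂ (G.adj_symm h)) (fun h => hbk₂ (G.adj_symm h))
            (fun h => hKu k₂ hk₂ (G.adj_symm h)) (fun h => hak₂ (G.adj_symm h))
            (fun h => hbk₁ (G.adj_symm h)) (fun h => hKu k₁ hk₁ (G.adj_symm h))
            (fun h => hak₁ (G.adj_symm h)) hnk₁w₂
            (hM.1.2 w hwM u huM)
            (fun h => hdisjAB w ((hAA w).2 ⟨hwM, hwu, G.adj_symm h⟩) h1)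
            (hM.1.2 w hwM w₂ hw₂M) (fun h => hab (G.adj_symm h))
            (fun h => hdisjAB w₂ h2 ((hBB w₂).2 ⟨hw₂M, hw₂u, h⟩))
            (hM.1.2 u huM w₂ hw₂M)
            (fun h => hk₂M (h ▸ hwM)) k₂nb (fun h => hk₂M (h ▸ huM)) k₂na
            k₁nb (fun h => hk₁M (h ▸ huM)) k₁na (fun h => hk₁M (h ▸ hw₂M))
            hwu (fun h => haM (h ▸ hwM)) hww₂ (Ne.symm hne)
            (fun h => hbM (h ▸ hw₂M)) (Ne.symm hw₂u)
        · -- both BB : C5 (k₁ k₂ w₂ b w)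
          obtain ⟨hwM, hwu, hbw⟩ := (hBB w).1 h1
          obtain ⟨hw₂M, hw₂u, hbw₂⟩ := (hBB w₂).1 h2
          exact chordal_c5 hch h12 (G.adj_symm hw₂k₂) (G.adj_symm hbw₂) hbw hwk₁
            hnk₁w₂ (fun h => hbk₁ (G.adj_symm h)) (fun h => hbk₂ (G.adj_symm h))
            (fun h => hnwk₂ (G.adj_symm h)) (hM.1.2 w₂ hw₂M w hwM)
            (fun h => hk₁M (h ▸ hw₂M)) k₁nb k₂nb (fun h => hk₂M (h ▸ hwM)) (Ne.symm hww₂)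
      -- (i) every maximal independent set of K has card M.card - 2
      have hKmax : ∀ U, IsMaxIndepIn G K U → U.card + 2 = M.card := by
        intro U hU
        have hUK : ∀ k ∈ U, k ∈ K := fun k hk => hU.1.1 hk
        have haU : a ∉ U := fun h => ((hK a).1 (hUK a h)).2.1 rfl
        have hbU : b ∉ U := fun h => ((hK b).1 (hUK b h)).2.2.1 rfl
        have hmax2 : IsMaxIndepIn G A (insert a (insert b U)) := by
          apply maxIndep_of_dominating
          · constructor
            · intro x hx
              rcases Finset.mem_insert.1 hx with h | h
              · exact h ▸ ha
              rcases Finset.mem_insert.1 h with h' | h'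
              · exact h' ▸ hb
              · exact ((hK x).1 (hUK x h')).1
            · intro p hp q hq
              rcases Finset.mem_insert.1 hp with h | h
              · subst h
                rcases Finset.mem_insert.1 hq with h' | h'
                · exact h' ▸ G.irrefl
                rcases Finset.mem_insert.1 h' with h'' | h''
                · exact h'' ▸ hab
                · exact ((hK q).1 (hUK q h'')).2.2.2.1
              rcases Finset.mem_insert.1 h with h' | h'
              · subst h'
                rcases Finset.mem_insert.1 hq with h'' | h''
                · exact h'' ▸ fun hh => hab (G.adj_symm hh)
                rcases Finset.mem_insert.1 h'' with h₃ | h₃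
                · exact h₃ ▸ G.irrefl
                · exact ((hK q).1 (hUK q h₃)).2.2.2.2
              · rcases Finset.mem_insert.1 hq with h'' | h''
                · exact h'' ▸ fun hh => ((hK p).1 (hUK p h')).2.2.2.1 (G.adj_symm hh)
                rcases Finset.mem_insert.1 h'' with h₃ | h₃
                · exact h₃ ▸ fun hh => ((hK p).1 (hUK p h')).2.2.2.2 (G.adj_symm hh)
                · exact hU.1.2 p h' q h₃
          · intro t htA htni
            by_cases hat : G.Adj a t
            · exact ⟨a, Finset.mem_insert_self _ _, hat⟩
            by_cases hbt : G.Adj b t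
            · exact ⟨b, Finset.mem_insert_of_mem (Finset.mem_insert_self _ _), hbt⟩
            have hta : t ≠ a := fun h => htni (h ▸ Finset.mem_insert_self _ _)
            have htb : t ≠ b := fun h =>
              htni (h ▸ Finset.mem_insert_of_mem (Finset.mem_insert_self _ _))
            have htK : t ∈ K := (hK t).2 ⟨htA, hta, htb, hat, hbt⟩
            have htU : t ∉ U := fun h =>
              htni (Finset.mem_insert_of_mem (Finset.mem_insert_of_mem h))
            obtain ⟨m, hmU, hmt⟩ := maxIndep_dominates hU htK htU
            exact ⟨m, Finset.mem_insert_of_mem (Finset.mem_insert_of_mem hmU), hmt⟩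
        have hcards := hwc _ _ hmax2 hM
        have hanb : a ∉ insert b U := by
          intro h
          rcases Finset.mem_insert.1 h with h' | h'
          · exact hne h'
          · exact haU h'
        rw [Finset.card_insert_of_notMem hanb, Finset.card_insert_of_notMem hbU] at hcards
        omega
      -- cardinality partition of M
      have hMcard : M.card = 1 + AA.card + BB.card := by
        have hsplitset : M.erase u = AA ∪ BB := by
          ext w
          rw [Finset.mem_union, Finset.mem_erase, hAA, hBB]
          constructor
          · rintro ⟨hwu, hwM⟩
            rcases hsplit w hwM hwu with h | h
            · exact Or.inl ⟨hwM, hwu, h⟩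
            · exact Or.inr ⟨hwM, hwu, h⟩
          · rintro (⟨h1, h2, _⟩ | ⟨h1, h2, _⟩) <;> exact ⟨h2, h1⟩
        have hdisj' : Disjoint AA BB := Finset.disjoint_left.2 hdisjAB
        have h1 : (M.erase u).card + 1 = M.card := Finset.card_erase_add_one huM
        have h2 : (AA ∪ BB).card = AA.card + BB.card := Finset.card_union_of_disjoint hdisj'
        rw [hsplitset] at h1
        omega
      -- CASE SPLIT on empty private classes
      by_cases hex : ∃ w ∈ AA ∪ BB, ∀ k ∈ K, ¬ G.Adj w k
      · obtain ⟨w₀, hw₀mem, hw₀e⟩ := hex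
        by_cases hex2 : ∃ w₁ ∈ AA ∪ BB, w₁ ≠ w₀ ∧ ∀ k ∈ K, ¬ G.Adj w₁ k
        · -- TWO empty classes : contradiction via double deletion
          obtain ⟨w₁, hw₁mem, hw₁w₀, hw₁e⟩ := hex2
          have hw₀M : w₀ ∈ M := by
            rcases Finset.mem_union.1 hw₀mem with h | h
            · exact ((hAA w₀).1 h).1
            · exact ((hBB w₀).1 h).1
          have hw₀u : w₀ ≠ u := by
            rcases Finset.mem_union.1 hw₀mem with h | h
            · exact ((hAA w₀).1 h).2.1
            · exact ((hBB w₀).1 h).2.1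
          have hw₁M : w₁ ∈ M := by
            rcases Finset.mem_union.1 hw₁mem with h | h
            · exact ((hAA w₁).1 h).1
            · exact ((hBB w₁).1 h).1
          have hw₁u : w₁ ≠ u := by
            rcases Finset.mem_union.1 hw₁mem with h | h
            · exact ((hAA w₁).1 h).2.1
            · exact ((hBB w₁).1 h).2.1
          set A1 := delClosedNbhd G A u with hA1def
          have hw₀A1 : w₀ ∈ A1 := mem_delClosedNbhd.2 ⟨hMsub hw₀M, hw₀u, hM.1.2 u huM w₀ hw₀M⟩
          set A2 := delClosedNbhd G A1 w₀ with hA2def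
          have hA2wc : WellCoveredOn G A2 := wcOn_delClosedNbhd (wcOn_delClosedNbhd hwc huA) hw₀A1
          have hmemA2 : ∀ y, y ∈ A2 ↔ (y ∈ A ∧ y ≠ u ∧ ¬ G.Adj u y) ∧ y ≠ w₀ ∧ ¬ G.Adj w₀ y := by
            intro y
            rw [hA2def, mem_delClosedNbhd, hA1def, mem_delClosedNbhd]
          -- M minus u, w₀ is maximal in A2 with card M.card - 2
          have hM2 : IsMaxIndepIn G A2 ((M.erase u).erase w₀) := by
            apply maxIndep_of_dominating
            · constructor
              · intro m hm
                have hmw₀ := Finset.ne_of_mem_erase hm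
                have hmu := Finset.ne_of_mem_erase (Finset.mem_of_mem_erase hm)
                have hmM := Finset.mem_of_mem_erase (Finset.mem_of_mem_erase hm)
                exact (hmemA2 m).2 ⟨⟨hMsub hmM, hmu, hM.1.2 u huM m hmM⟩, hmw₀,
                  hM.1.2 w₀ hw₀M m hmM⟩
              · intro p hp q hq
                exact hM.1.2 p (Finset.mem_of_mem_erase (Finset.mem_of_mem_erase hp)) q
                  (Finset.mem_of_mem_erase (Finset.mem_of_mem_erase hq))
            · intro t htA2 htni
              obtain ⟨⟨htA, htu, hut⟩, htw₀, hw₀t⟩ := (hmemA2 t).1 htA2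
              have htM : t ∉ M := by
                intro h
                exact htni (Finset.mem_erase.2 ⟨htw₀, Finset.mem_erase.2 ⟨htu, h⟩⟩)
              obtain ⟨m, hmM, hmt⟩ := maxIndep_dominates hM htA htM
              have hmu : m ≠ u := fun h => hut (h ▸ hmt)
              have hmw₀ : m ≠ w₀ := fun h => hw₀t (h ▸ hmt)
              exact ⟨m, Finset.mem_erase.2 ⟨hmw₀, Finset.mem_erase.2 ⟨hmu, hmM⟩⟩, hmt⟩
          obtain ⟨U_K, hU_K⟩ := exists_maxIndep G K
          have hU_Kcard := hKmax U_K hU_K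
          -- insert w₁ U_K is independent in A2
          have hins : IsIndepIn G A2 (insert w₁ U_K) := by
            apply indepIn_insert
            · constructor
              · intro k hk
                have hkK := hU_K.1.1 hk
                have hkM := hKM k hkK
                exact (hmemA2 k).2 ⟨⟨((hK k).1 hkK).1, fun h => hkM (h ▸ huM), hKu k hkK⟩,
                  fun h => hkM (h ▸ hw₀M), hw₀e k hkK⟩
              · exact hU_K.1.2
            · exact (hmemA2 w₁).2 ⟨⟨hMsub hw₁M, hw₁u, hM.1.2 u huM w₁ hw₁M⟩, hw₁w₀,
                hM.1.2 w₀ hw₀M w₁ hw₁M⟩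
            · intro k hk
              exact hw₁e k (hU_K.1.1 hk)
          obtain ⟨T, hTsub, hT⟩ := exists_maxIndep_ext hins
          have hTcard := hA2wc _ _ hT hM2
          have hc1 : ((M.erase u).erase w₀).card + 2 = M.card := by
            rw [Finset.card_erase_of_mem (Finset.mem_erase.2 ⟨hw₀u, hw₀M⟩),
              Finset.card_erase_of_mem huM]
            have h1 : 0 < M.card := Finset.card_pos.2 ⟨u, huM⟩
            have h2 : 1 < M.card := by
              have := Finset.one_lt_card.2 ⟨u, huM, w₀, hw₀M, Ne.symm hw₀u⟩
              omega
            omega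
          have hw₁U_K : w₁ ∉ U_K := fun h => hKM w₁ (hU_K.1.1 h) hw₁M
          have hc2 : (insert w₁ U_K).card = U_K.card + 1 := Finset.card_insert_of_notMem hw₁U_K
          have hc3 : (insert w₁ U_K).card ≤ T.card := Finset.card_le_card hTsub
          omega
        · -- at most ONE empty class : endgame
          push_neg at hex2
          have honly : ∀ w ∈ AA ∪ BB, (∀ k ∈ K, ¬ G.Adj w k) → w = w₀ := by
            intro w hw hempty
            by_contra hne'
            obtain ⟨k, hk, hadj⟩ := hex2 w hw hne'
            exact hempty k hk hadj
          rcases Finset.mem_union.1 hw₀mem with hw₀AA | hw₀BB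
          · exact core_endgame hch hwc hM huM ha hb hua hub hab hne hnp hsplit AA BB K
              hAA hBB hK hdisjAB hKM hKu huniq hwitex hcross hKmax hMcard w₀ hw₀AA hw₀e honly
          · refine core_endgame hch hwc hM huM hb ha hub hua (fun h => hab (G.adj_symm h))
              (Ne.symm hne) hnp ?_ BB AA K hBB hAA ?_ ?_ hKM hKu ?_ ?_ ?_ hKmax ?_
              w₀ hw₀BB hw₀e ?_
            · intro w hw hwu
              exact (hsplit w hw hwu).symm
            · intro k
              rw [hK]
              constructor
              · rintro ⟨h1, h2, h3, h4, h5⟩; exact ⟨h1, h3, h2, h5, h4⟩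
              · rintro ⟨h1, h2, h3, h4, h5⟩; exact ⟨h1, h3, h2, h5, h4⟩
            · intro w hwBB hwAA
              exact hdisjAB w hwAA hwBB
            · intro k hk w hw w' hw' hwk hw'k
              exact huniq k hk w (by rwa [Finset.union_comm]) w' (by rwa [Finset.union_comm])
                hwk hw'k
            · intro k hk
              obtain ⟨w, hw, hadj⟩ := hwitex k hk
              exact ⟨w, by rwa [Finset.union_comm], hadj⟩
            · intro k₁ hk₁ k₂ hk₂ h12 w hw hwk₁
              exact hcross k₁ hk₁ k₂ hk₂ h12 w (by rwa [Finset.union_comm]) hwk₁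
            · omega
            · intro w hw hempty
              exact honly w (by rwa [Finset.union_comm]) hempty
      · -- NO empty class : full transversal contradiction
        push_neg at hex
        have hpick : ∀ w : {x // x ∈ AA ∪ BB}, ∃ k, k ∈ K ∧ G.Adj w.1 k := by
          intro w
          obtain ⟨k, hk, hadj⟩ := hex w.1 w.2
          exact ⟨k, hk, hadj⟩
        set pick : {x // x ∈ AA ∪ BB} → V := fun w => (hpick w).choose with hpickdef
        have hpickK : ∀ w, pick w ∈ K := fun w => (hpick w).choose_spec.1
        have hpickadj : ∀ w, G.Adj w.1 (pick w) := fun w => (hpick w).choose_spec.2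
        have hpickinj : Function.Injective pick := by
          intro w w' h
          apply Subtype.ext
          exact huniq (pick w) (hpickK w) w.1 w.2 w'.1 w'.2 (hpickadj w) (h ▸ hpickadj w')
        set T₀ := (AA ∪ BB).attach.image pick with hT₀def
        have hT₀card : T₀.card = AA.card + BB.card := by
          rw [hT₀def, Finset.card_image_of_injective _ hpickinj, Finset.card_attach]
          exact Finset.card_union_of_disjoint (Finset.disjoint_left.2 hdisjAB)
        have hT₀indep : IsIndepIn G K T₀ := by
          constructor
          · intro k hk
            obtain ⟨w, -, rfl⟩ := Finset.mem_image.1 hk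
            exact hpickK w
          · intro p hp q hq hadj
            obtain ⟨w, -, rfl⟩ := Finset.mem_image.1 hp
            obtain ⟨w', -, rfl⟩ := Finset.mem_image.1 hq
            have hww' : w ≠ w' := by
              intro h
              exact G.irrefl (h ▸ hadj)
            have := hcross (pick w) (hpickK w) (pick w') (hpickK w') hadj w.1 w.2 (hpickadj w)
            exact hww' (Subtype.ext (huniq (pick w') (hpickK w') w.1 w.2 w'.1 w'.2 this
              (hpickadj w')))
        obtain ⟨Ufull, hT₀sub, hUfull⟩ := exists_maxIndep_ext hT₀indep
        have h1 := hKmax Ufull hUfull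
        have h2 : T₀.card ≤ Ufull.card := Finset.card_le_card hT₀sub
        omega

/-- A non-simplicial vertex can be deleted preserving well-coveredness. -/
theorem nonsimplicial_wcOn_erase (hch : IsChordalGraph G) {A : Finset V}
    (hwc : WellCoveredOn G A) {u a b : V} (hu : u ∈ A) (ha : a ∈ A) (hb : b ∈ A)
    (hua : G.Adj u a) (hub : G.Adj u b) (hab : ¬ G.Adj a b) (hne : a ≠ b) :
    WellCoveredOn G (A.erase u) := by
  have key : ∀ S, IsMaxIndepIn G (A.erase u) S → IsMaxIndepIn G A S := by
    intro S hS
    have hsub : S ⊆ A := hS.1.1.trans (Finset.erase_subset _ _)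
    by_cases hdom : ∃ m ∈ S, G.Adj m u
    · obtain ⟨m, hmS, hmu⟩ := hdom
      refine ⟨⟨hsub, hS.1.2⟩, ?_⟩
      intro T hT hST
      have huT : u ∉ T := fun huT => hT.2 m (hST hmS) u huT hmu
      exact hS.2 T ⟨fun t ht => Finset.mem_erase.2 ⟨fun h => huT (h ▸ ht), hT.1 ht⟩, hT.2⟩ hST
    · push_neg at hdom
      exfalso
      have hins : IsIndepIn G A (insert u S) :=
        indepIn_insert ⟨hsub, hS.1.2⟩ hu (fun y hy => fun h => hdom y hy (G.adj_symm h))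
      have hmax : IsMaxIndepIn G A (insert u S) := by
        refine ⟨hins, ?_⟩
        intro T hT hST
        have huT : u ∈ T := hST (Finset.mem_insert_self _ _)
        have hTe : T.erase u ⊆ A.erase u := fun t ht =>
          Finset.mem_erase.2 ⟨Finset.ne_of_mem_erase ht, hT.1 (Finset.mem_of_mem_erase ht)⟩
        have hTei : IsIndepIn G (A.erase u) (T.erase u) :=
          ⟨hTe, fun p hp q hq => hT.2 p (Finset.mem_of_mem_erase hp) q (Finset.mem_of_mem_erase hq)⟩
        have hSsub : S ⊆ T.erase u := by
          intro s hs
          refine Finset.mem_erase.2 ⟨?_, hST (Finset.mem_insert_of_mem hs)⟩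
          intro h
          exact (Finset.mem_erase.1 (hS.1.1 hs)).1 h
        have := hS.2 _ hTei hSsub
        apply Finset.Subset.antisymm
        · intro t ht
          by_cases htu : t = u
          · exact htu ▸ Finset.mem_insert_self _ _
          · exact Finset.mem_insert_of_mem (this ▸ Finset.mem_erase.2 ⟨htu, ht⟩)
        · exact hST
      apply core_no_private hch A.card A le_rfl hwc (insert u S) u a b hmax (Finset.mem_insert_self _ _)
        ha hb hua hub hab hne
      intro y hy hyM hadj
      by_contra hcon
      push_neg at hcon
      -- y is an external private neighbour of u: then S ∪ {y} was independent in A.erase u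
      have hyu : y ≠ u := fun h => hyM (h ▸ Finset.mem_insert_self _ _)
      have hyS : IsIndepIn G (A.erase u) (insert y S) := by
        refine indepIn_insert hS.1 (Finset.mem_erase.2 ⟨hyu, hy⟩) ?_
        intro m hm hadjm
        exact (Finset.mem_erase.1 (hS.1.1 hm)).1
          (hcon m (Finset.mem_insert_of_mem hm) (G.adj_symm hadjm))
      have := hS.2 _ hyS (Finset.subset_insert _ _)
      exact hyM (Finset.mem_insert_of_mem (this ▸ Finset.mem_insert_self y S))
  intro S T hS hT
  exact hwc _ _ (key S hS) (key T hT)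

/-- Chordal + well-covered implies vertex decomposable. -/
theorem vdOn_of_wcOn (hch : IsChordalGraph G) :
    ∀ (n : ℕ) (A : Finset V), A.card ≤ n → WellCoveredOn G A → VertexDecomposableOn G A := by
  intro n
  induction n with
  | zero =>
    intro A hA hwc
    have : A = ∅ := Finset.card_eq_zero.1 (Nat.le_zero.1 hA)
    subst this
    rw [VertexDecomposableOn]
    exact ⟨hwc, Or.inl (by simp)⟩
  | succ n ih =>
    intro A hA hwc
    rw [VertexDecomposableOn]
    refine ⟨hwc, ?_⟩
    by_cases hedge : ∀ x ∈ A, ∀ y ∈ A, ¬ G.Adj x y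
    · exact Or.inl hedge
    · push_neg at hedge
      obtain ⟨x, hx, y, hy, hxy⟩ := hedge
      have hz : ∃ z ∈ A, WellCoveredOn G (A.erase z) := by
        by_cases hwcx : WellCoveredOn G (A.erase x)
        · exact ⟨x, hx, hwcx⟩
        · have hsimp : ∀ p ∈ A, ∀ q ∈ A, G.Adj x p → G.Adj x q → p ≠ q → G.Adj p q := by
            by_contra hcon; push_neg at hcon
            obtain ⟨p, hp, q, hq, hxp, hxq, hpq, hnadj⟩ := hcon
            exact hwcx (nonsimplicial_wcOn_erase hch hwc hx hp hq hxp hxq hnadj hpq)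
          exact ⟨y, hy, wcOn_erase_of_simplicial_nbr hwc hx hsimp hy hxy⟩
      obtain ⟨z, hzA, hwcz⟩ := hz
      refine Or.inr ⟨z, hzA, ?_, ?_⟩
      · apply ih _ _ hwcz
        have := Finset.card_erase_of_mem hzA
        omega
      · apply ih _ _ (wcOn_delClosedNbhd hwc hzA)
        have hlt : (delClosedNbhd G A z).card < A.card :=
          Finset.card_lt_card (Finset.filter_ssubset.mpr ⟨z, hzA, by simp⟩)
        omega

lemma vdOn_wcOn {A : Finset V} (h : VertexDecomposableOn G A) : WellCoveredOn G A := by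
  rw [VertexDecomposableOn] at h
  exact h.1

lemma delClosedNbhd_eq_erase {A : Finset V} {v : V} (hiso : ∀ y, ¬ G.Adj v y) :
    delClosedNbhd G A v = A.erase v := by
  ext y
  rw [mem_delClosedNbhd, Finset.mem_erase]
  exact ⟨fun h => ⟨h.2.1, h.1⟩, fun h => ⟨h.2, h.1, hiso y⟩⟩

end CoreDev
/-- If a chordal graph is vertex decomposable, then its set of shedding
vertices is a dominating set. -/
theorem statement5 {V : Type*} [Fintype V] (G : SimpleGraph V)
    (hch : IsChordalGraph G) (hvd : VertexDecomposable G) :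
    IsDominatingSet G (Shed G) := by
  have hwc : WellCoveredOn G Finset.univ := vdOn_wcOn hvd
  intro v hv
  have hbad : ¬ WellCoveredOn G (Finset.univ.erase v) := by
    intro hwcv
    exact hv ⟨vdOn_of_wcOn hch _ _ le_rfl hwcv,
      vdOn_of_wcOn hch _ _ le_rfl (wcOn_delClosedNbhd hwc (Finset.mem_univ v))⟩
  have hnon : ∃ u, G.Adj v u := by
    by_contra hiso; push_neg at hiso
    exact hbad (delClosedNbhd_eq_erase (A := Finset.univ) hiso ▸
      wcOn_delClosedNbhd hwc (Finset.mem_univ v))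
  obtain ⟨u, hu⟩ := hnon
  have hsimp : ∀ p ∈ Finset.univ, ∀ q ∈ Finset.univ, G.Adj v p → G.Adj v q → p ≠ q →
      G.Adj p q := by
    by_contra hcon; push_neg at hcon
    obtain ⟨p, hp, q, hq, hvp, hvq, hpq, hnadj⟩ := hcon
    exact hbad (nonsimplicial_wcOn_erase hch hwc (Finset.mem_univ v) hp hq hvp hvq hnadj hpq)
  have hwcu : WellCoveredOn G (Finset.univ.erase u) :=
    wcOn_erase_of_simplicial_nbr hwc (Finset.mem_univ v) hsimp (Finset.mem_univ u) hu
  exact ⟨u, ⟨vdOn_of_wcOn hch _ _ le_rfl hwcu,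
    vdOn_of_wcOn hch _ _ le_rfl (wcOn_delClosedNbhd hwc (Finset.mem_univ u))⟩, G.adj_symm hu⟩
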